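/- Let P be a strongly linked tree forcing: whenever S, T ∈ P with stem(T) ⊑ stem(S) and stem(S) ∈ T, there is R ∈ P with R ⊆ S ∩ T. Then for every T ∈ P, every branch x ∈ [T] is an I_P-shift density point of [T]; that is, D_{I_P}([T]) = [T]. -/

import Mathlib

open Set

noncomputable section

/-- The restriction `x↾n` of `x : ℕ → α` to its first `n` values, as a list. -/
def res {α : Type*} (x : ℕ → α) (n : ℕ) : List α := List.ofFn (fun i : Fin n => x i)

/-- A (set-theoretic) tree on `α`: a collection of finite sequences closed under
initial segments. -/
def IsTree {α : Type*} (T : Set (List α)) : Prop :=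
  ∀ s ∈ T, ∀ t : List α, t <+: s → t ∈ T

/-- The set `[T]` of branches of a tree `T`. -/
def branches {α : Type*} (T : Set (List α)) : Set (ℕ → α) :=
  {x | ∀ n : ℕ, res x n ∈ T}

/-- A perfect tree: a nonempty tree with a splitting node above every node. -/
def IsPerfectTree {α : Type*} (T : Set (List α)) : Prop :=
  IsTree T ∧ T.Nonempty ∧
    ∀ s ∈ T, ∃ t ∈ T, s <+: t ∧ ∃ a b : α, a ≠ b ∧ t ++ [a] ∈ T ∧ t ++ [b] ∈ T

/-- A tree forcing: a collection of perfect trees containing the full tree and closed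
under restriction `T ↦ T_u`. -/
def IsTreeForcing {α : Type*} (P : Set (Set (List α))) : Prop :=
  (∀ T ∈ P, IsPerfectTree T) ∧ Set.univ ∈ P ∧
    ∀ T ∈ P, ∀ u ∈ T, {t ∈ T | u <+: t ∨ t <+: u} ∈ P

/-- `A` is `P`-nowhere dense. -/
def PNwd {α : Type*} (P : Set (Set (List α))) (A : Set (ℕ → α)) : Prop :=
  ∀ T ∈ P, ∃ S ∈ P, S ⊆ T ∧ branches S ∩ A = ∅

/-- `A` belongs to the σ-ideal `I_P` generated by the `P`-nowhere dense sets. -/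
def PIdeal {α : Type*} (P : Set (Set (List α))) (A : Set (ℕ → α)) : Prop :=
  ∃ f : ℕ → Set (ℕ → α), (∀ n, PNwd P (f n)) ∧ A ⊆ ⋃ n, f n

/-- `A` belongs to the auxiliary ideal `I*_P`. -/
def PIstar {α : Type*} (P : Set (Set (List α))) (A : Set (ℕ → α)) : Prop :=
  ∀ T ∈ P, ∃ S ∈ P, S ⊆ T ∧ PIdeal P (branches S ∩ A)

/-- `A` is `P`-measurable. -/
def PMeasurable {α : Type*} (P : Set (Set (List α))) (A : Set (ℕ → α)) : Prop :=
  ∀ T ∈ P, ∃ S ∈ P, S ⊆ T ∧ (PIdeal P (branches S \ A) ∨ PIdeal P (branches S ∩ A))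

/-- Compatibility of two conditions in the tree forcing `P`. -/
def Compat {α : Type*} (P : Set (Set (List α))) (S T : Set (List α)) : Prop :=
  ∃ R ∈ P, R ⊆ S ∧ R ⊆ T

/-- `D` is an antichain in the tree forcing `P`. -/
def IsAntichainIn {α : Type*} (P D : Set (Set (List α))) : Prop :=
  D ⊆ P ∧ ∀ S ∈ D, ∀ T ∈ D, S ≠ T → ¬ Compat P S T

/-- `D` is a maximal antichain in the tree forcing `P`. -/
def IsMaxAntichainIn {α : Type*} (P D : Set (Set (List α))) : Prop :=
  IsAntichainIn P D ∧ ∀ T ∈ P, ∃ S ∈ D, Compat P S T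

/-- `s` is the stem of the tree `T`: the longest node comparable with all nodes of `T`. -/
def IsStem {α : Type*} (T : Set (List α)) (s : List α) : Prop :=
  s ∈ T ∧ (∀ t ∈ T, s <+: t ∨ t <+: s) ∧
    ∀ s' ∈ T, (∀ t ∈ T, s' <+: t ∨ t <+: s') → s'.length ≤ s.length

/-- `P` is strongly linked: any `S, T ∈ P` with `stem(T) ⊑ stem(S)` and `stem(S) ∈ T`
have a common refinement `R ∈ P` with `R ⊆ S ∩ T`. -/
def StronglyLinked {α : Type*} (P : Set (Set (List α))) : Prop :=
  ∀ S ∈ P, ∀ T ∈ P, ∀ sS sT : List α, IsStem S sS → IsStem T sT →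
    sT <+: sS → sS ∈ T → ∃ R ∈ P, R ⊆ S ∩ T

section Helpers

variable {α : Type*}

lemma res_length (x : ℕ → α) (n : ℕ) : (res x n).length = n := by simp [res]

lemma eq_of_two_prefix {u s : List α} {a b : α} (ha : u ++ [a] <+: s) (hb : u ++ [b] <+: s) :
    a = b := by
  rcases List.prefix_or_prefix_of_prefix ha hb with h | h
  · have := h.eq_of_length (by simp)
    simpa using this
  · have := h.eq_of_length (by simp)
    simpa using this.symm

lemma res_prefix (x : ℕ → α) {m n : ℕ} (h : m ≤ n) : res x m <+: res x n := by
  refine List.prefix_iff_eq_take.mpr ?_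
  apply List.ext_getElem (by simp [res, Nat.min_eq_left h])
  intro i h1 h2
  simp [res]

lemma branches_mono {S T : Set (List α)} (h : S ⊆ T) : branches S ⊆ branches T :=
  fun _ hx n => h (hx n)

lemma PIdeal_mono {P : Set (Set (List α))} {A B : Set (ℕ → α)} (h : B ⊆ A)
    (hA : PIdeal P A) : PIdeal P B := by
  obtain ⟨f, h1, h2⟩ := hA
  exact ⟨f, h1, h.trans h2⟩

lemma PIdeal_empty {P : Set (Set (List α))} : PIdeal P (∅ : Set (ℕ → α)) := by
  refine ⟨fun _ => ∅, fun n T' hT' => ⟨T', hT', Subset.rfl, by simp⟩, by simp⟩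

lemma exists_long_node {T : Set (List α)} (hT : IsPerfectTree T) (N : ℕ) :
    ∃ t ∈ T, N ≤ t.length := by
  induction N with
  | zero => obtain ⟨t, ht⟩ := hT.2.1; exact ⟨t, ht, Nat.zero_le _⟩
  | succ N ih =>
    obtain ⟨t, ht, hlen⟩ := ih
    obtain ⟨t', ht', hpre, a, b, _, ha, _⟩ := hT.2.2 t ht
    have := hpre.length_le
    exact ⟨t' ++ [a], ha, by simp; omega⟩

lemma nil_mem_of_perfect {T : Set (List α)} (hT : IsPerfectTree T) : ([] : List α) ∈ T := by
  obtain ⟨t, ht⟩ := hT.2.1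
  exact hT.1 t ht [] (List.nil_prefix)

lemma exists_stem {T : Set (List α)} (hT : IsPerfectTree T) : ∃ s, IsStem T s := by
  obtain ⟨htree, hne, hsplit⟩ := hT
  have hnilT : ([] : List α) ∈ T := nil_mem_of_perfect ⟨htree, hne, hsplit⟩
  set C := {s | s ∈ T ∧ ∀ t ∈ T, s <+: t ∨ t <+: s} with hC
  have hnilC : ([] : List α) ∈ C := ⟨hnilT, fun t _ => Or.inl (List.nil_prefix)⟩
  obtain ⟨t0, ht0, _, a, b, hab, ha, hb⟩ := hsplit [] hnilT
  have hbound : ∀ s ∈ C, s.length ≤ t0.length := by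
    rintro s ⟨hsT, hcomp⟩
    by_contra h
    push_neg at h
    have key : ∀ c : α, t0 ++ [c] ∈ T → t0 ++ [c] <+: s := by
      intro c hc
      rcases hcomp _ hc with h' | h'
      · have hle := h'.length_le
        simp at hle
        have : s = t0 ++ [c] := h'.eq_of_length (by simp; omega)
        exact this ▸ List.prefix_refl _
      · exact h'
    exact hab (eq_of_two_prefix (key a ha) (key b hb))
  have hmax : ∀ B : ℕ, (∀ s ∈ C, s.length ≤ B) → ∃ s ∈ C, ∀ s' ∈ C, s'.length ≤ s.length := by
    intro B
    induction B with
    | zero => intro h; exact ⟨[], hnilC, fun s' hs' => by simpa using h s' hs'⟩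
    | succ B ih =>
      intro h
      by_cases hex : ∃ s ∈ C, s.length = B + 1
      · obtain ⟨s, hs, hlen⟩ := hex
        exact ⟨s, hs, fun s' hs' => hlen ▸ h s' hs'⟩
      · push_neg at hex
        apply ih
        intro s hs
        have h1 := h s hs
        have h2 := hex s hs
        omega
  obtain ⟨s, ⟨h1, h2⟩, h3⟩ := hmax t0.length hbound
  exact ⟨s, h1, h2, fun s' hs' hc => h3 s' ⟨hs', hc⟩⟩

lemma branches_not_in_ideal {P : Set (Set (List α))} (hP : IsTreeForcing P)
    {R : Set (List α)} (hR : R ∈ P) : ¬ PIdeal P (branches R) := by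
  obtain ⟨hperf, huniv, hrestr⟩ := hP
  rintro ⟨f, hnwd, hcover⟩
  obtain ⟨_, _, _, a0, b0, _, _, _⟩ := (hperf _ huniv).2.2 [] trivial
  haveI : Inhabited α := ⟨a0⟩
  -- the recursion step
  have step : ∀ (n : ℕ) (q : {p : Set (List α) × List α // p.1 ∈ P ∧ p.2 ∈ p.1}),
      ∃ q' : {p : Set (List α) × List α // p.1 ∈ P ∧ p.2 ∈ p.1},
        q'.1.1 ⊆ q.1.1 ∧ q.1.2 <+: q'.1.2 ∧ n + 1 ≤ q'.1.2.length ∧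
          branches q'.1.1 ∩ f n = ∅ := by
    rintro n ⟨⟨Rn, un⟩, hRn, hun⟩
    have hres : {t ∈ Rn | un <+: t ∨ t <+: un} ∈ P := hrestr Rn hRn un hun
    obtain ⟨S, hS, hSsub, hSdisj⟩ := hnwd n _ hres
    obtain ⟨t, htS, hlen⟩ := exists_long_node (hperf S hS) (max (n + 1) (un.length + 1))
    have htcomp := hSsub htS
    have hpre : un <+: t := by
      rcases htcomp.2 with h | h
      · exact h
      · exfalso
        have h1 := le_trans (le_max_right (n + 1) (un.length + 1)) hlen
        have h2 := h.length_le
        omega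
    refine ⟨⟨(S, t), hS, htS⟩, fun y hy => (hSsub hy).1, hpre, ?_, hSdisj⟩
    exact le_trans (le_max_left _ _) hlen
  have hnilR : ([] : List α) ∈ R := nil_mem_of_perfect (hperf R hR)
  let q0 : {p : Set (List α) × List α // p.1 ∈ P ∧ p.2 ∈ p.1} := ⟨(R, []), hR, hnilR⟩
  let g : ℕ → {p : Set (List α) × List α // p.1 ∈ P ∧ p.2 ∈ p.1} :=
    fun n => Nat.rec q0 (fun n q => Classical.choose (step n q)) n
  have hg : ∀ n, (g (n + 1)).1.1 ⊆ (g n).1.1 ∧ (g n).1.2 <+: (g (n + 1)).1.2 ∧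
      n + 1 ≤ (g (n + 1)).1.2.length ∧ branches (g (n + 1)).1.1 ∩ f n = ∅ :=
    fun n => Classical.choose_spec (step n (g n))
  set u : ℕ → List α := fun n => (g n).1.2 with hu
  set Rs : ℕ → Set (List α) := fun n => (g n).1.1 with hRs
  have hchain : ∀ i j, i ≤ j → u i <+: u j := by
    intro i j hij
    induction j with
    | zero => simpa [Nat.le_zero.mp hij] using List.prefix_refl (u 0)
    | succ j ih =>
      rcases Nat.lt_succ_iff_lt_or_eq.mp (Nat.lt_succ_of_le hij) with h | h
      · exact (ih (Nat.lt_succ_iff.mp h)).trans (hg j).2.1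
      · exact h ▸ List.prefix_refl _
    
  have hnest : ∀ i j, i ≤ j → Rs j ⊆ Rs i := by
    intro i j hij
    induction j with
    | zero => simpa [Nat.le_zero.mp hij] using Set.Subset.rfl
    | succ j ih =>
      rcases Nat.lt_succ_iff_lt_or_eq.mp (Nat.lt_succ_of_le hij) with h | h
      · exact ((hg j).1).trans (ih (Nat.lt_succ_iff.mp h))
      · exact h ▸ Set.Subset.rfl
  have hulen : ∀ n, n ≤ (u n).length := by
    intro n
    cases n with
    | zero => exact Nat.zero_le _
    | succ n => exact (hg n).2.2.1
  set x : ℕ → α := fun k => (u (k + 1)).getD k default with hx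
  have hres_eq : ∀ n m, n ≤ m → res x n = (u m).take n := by
    intro n m hnm
    apply List.ext_getElem
    · simp [res_length, hulen m |>.trans' hnm, Nat.min_eq_left (hnm.trans (hulen m))]
    · intro i h1 h2
      have hin : i < n := by simpa [res_length] using h1
      have hi1 : i < (u (i + 1)).length := lt_of_lt_of_le (Nat.lt_succ_self i) (hulen (i + 1))
      have hpre : u (i + 1) <+: u m := hchain (i + 1) m (by omega)
      calc (res x n)[i] = x i := by simp [res]
        _ = (u (i + 1)).getD i default := rfl
        _ = (u (i + 1))[i]'hi1 := List.getD_eq_getElem _ _ hi1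
        _ = (u m)[i]'(lt_of_lt_of_le hi1 hpre.length_le) := hpre.getElem hi1
        _ = ((u m).take n)[i]'h2 := List.getElem_take.symm
  have hx_mem : ∀ k, x ∈ branches (Rs k) := by
    intro k n
    have hm : res x n = (u (max n k)).take n := hres_eq n _ (le_max_left _ _)
    have humem : u (max n k) ∈ Rs k := hnest k _ (le_max_right _ _) (g (max n k)).2.2
    have htree : IsTree (Rs k) := (hperf _ (g k).2.1).1
    exact htree _ humem _ (hm ▸ List.take_prefix n (u (max n k)))
  have hx_R : x ∈ branches R := hx_mem 0
  obtain ⟨_, ⟨n, rfl⟩, hxn⟩ := hcover hx_R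
  have hdisj := (hg n).2.2.2
  exact (Set.eq_empty_iff_forall_notMem.mp hdisj x) ⟨hx_mem (n + 1), hxn⟩

end Helpers

/-- If `P` is a strongly linked tree forcing, then for every `T ∈ P` the set of
`I_P`-shift density points of `[T]` (in the sense that for all large `n`, every `S ∈ P`
with stem `x↾n` satisfies `[S] ∩ [T] ∉ I_P`) is exactly `[T]`. -/
theorem stmt12 {α : Type*} (P : Set (Set (List α))) (hP : IsTreeForcing P)
    (hSL : StronglyLinked P) (T : Set (List α)) (hT : T ∈ P) :
    {x : ℕ → α | ∃ m : ℕ, ∀ n ≥ m, ∀ S ∈ P, IsStem S (res x n) →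
      ¬ PIdeal P (branches S ∩ branches T)} = branches T := by
  obtain ⟨hperf, huniv, hrestr⟩ := hP
  obtain ⟨_, _, _, a, b, hab, _, _⟩ := (hperf _ huniv).2.2 [] trivial
  apply Set.Subset.antisymm
  · rintro x ⟨m, hm⟩
    intro k
    by_contra hk
    set N := max m k with hN
    set uu := res x N with huu
    have huT : uu ∉ T := by
      intro h
      exact hk ((hperf T hT).1 _ h _ (res_prefix x (le_max_right m k)))
    have hSP : {t ∈ Set.univ | uu <+: t ∨ t <+: uu} ∈ P := hrestr _ huniv uu trivial
    set S : Set (List α) := {t ∈ Set.univ | uu <+: t ∨ t <+: uu} with hSdef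
    have hstem : IsStem S uu := by
      refine ⟨⟨trivial, Or.inl (List.prefix_refl _)⟩, fun t ht => ht.2, ?_⟩
      rintro s' ⟨_, _⟩ hc
      by_contra hlen
      push_neg at hlen
      have key : ∀ c : α, uu ++ [c] <+: s' := by
        intro c
        have hmem : uu ++ [c] ∈ S := ⟨trivial, Or.inl ⟨[c], rfl⟩⟩
        rcases hc _ hmem with h | h
        · have hle := h.length_le
          simp at hle
          have : s' = uu ++ [c] := h.eq_of_length (by simp; omega)
          exact this ▸ List.prefix_refl _
        · exact h
      exact hab (eq_of_two_prefix (key a) (key b))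
    have hnot := hm N (le_max_left m k) S hSP hstem
    apply hnot
    have : branches S ∩ branches T = ∅ := by
      rw [Set.eq_empty_iff_forall_notMem]
      rintro y ⟨hyS, hyT⟩
      have h1 : res y N ∈ S := hyS N
      have h2 : res y N = uu := by
        rcases h1.2 with h | h
        · exact (h.eq_of_length (by simp [huu, res_length])).symm
        · exact h.eq_of_length (by simp [huu, res_length])
      exact huT (h2 ▸ hyT N)
    rw [this]
    exact PIdeal_empty
  · intro x hx
    obtain ⟨sT, hsT⟩ := exists_stem (hperf T hT)
    refine ⟨sT.length, fun n hn S hS hstem hid => ?_⟩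
    have hxT : res x n ∈ T := hx n
    have hpre : sT <+: res x n := by
      rcases hsT.2.1 _ hxT with h | h
      · exact h
      · have h1 := h.length_le
        have h2 : (res x n).length = n := res_length x n
        have : res x n = sT := h.eq_of_length (by omega)
        exact this ▸ List.prefix_refl _
    obtain ⟨R, hR, hRsub⟩ := hSL S hS T hT (res x n) sT hstem hsT hpre hxT
    have hRS : branches R ⊆ branches S ∩ branches T := by
      intro y hy
      exact ⟨fun j => (hRsub (hy j)).1, fun j => (hRsub (hy j)).2⟩
    exact branches_not_in_ideal ⟨hperf, huniv, hrestr⟩ hR (PIdeal_mono hRS hid)
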